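/- If there exists a linear (k, α) exact-regenerating code at the MSR point (B = kα, d = α + k − 1, β = 1) with exact regeneration of all systematic nodes, then for any k̂ ≤ k there exists a linear (k̂, α) exact-regenerating code at the MSR point (B̂ = k̂α, d̂ = α + k̂ − 1, β = 1) with exact regeneration of all systematic nodes. -/

import Mathlib

/-- A linear `(k, α)` MSR exact-regenerating code with `k` systematic nodes and `s`
non-systematic nodes: each node stores `α` linear combinations of the `B = kα` source
symbols, any `k` nodes allow reconstruction, and any failed systematic node is exactly
regenerated from any `d = α + k - 1` surviving nodes, each passing one linear
combination of its rows (`β = 1`). -/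
structure MSRCode (F : Type*) [Field F] (k α s : ℕ) where
  G : (Fin k ⊕ Fin s) → Matrix (Fin α) (Fin k × Fin α) F
  systematic : ∀ (m : Fin k) (i : Fin α) (q : Fin k × Fin α),
    G (Sum.inl m) i q = if q.1 = m ∧ q.2 = i then 1 else 0
  reconstruction : ∀ f : Fin k → (Fin k ⊕ Fin s), Function.Injective f →
    IsUnit (Matrix.det (Matrix.of fun p q : Fin k × Fin α => G (f p.1) p.2 q))
  regeneration : ∀ (l : Fin k) (D : Finset (Fin k ⊕ Fin s)),
    D.card = α + k - 1 → Sum.inl l ∉ D →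
    ∃ (x : (Fin k ⊕ Fin s) → Fin α → F) (Y : Fin α → (Fin k ⊕ Fin s) → F),
      ∀ (i : Fin α) (q : Fin k × Fin α),
        G (Sum.inl l) i q = ∑ m ∈ D, Y i m * ∑ j, x m j * G m j q

/-- If a linear `(k, α)` MSR exact-regenerating code exists, then for any `k̂ ≤ k` a
linear `(k̂, α)` MSR exact-regenerating code exists (same non-systematic node count). -/
theorem statement8 {F : Type*} [Field F] {k α s : ℕ} (kh : ℕ) (hkh : kh ≤ k)
    (h : Nonempty (MSRCode F k α s)) : Nonempty (MSRCode F kh α s) := by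
  obtain ⟨C⟩ := h
  -- embedding of node index sets
  set σ : (Fin kh ⊕ Fin s) → (Fin k ⊕ Fin s) := Sum.map (Fin.castLE hkh) id with hσ
  have σinj : Function.Injective σ := by
    intro a b hab
    cases a <;> cases b <;> simp [σ, Fin.castLE_injective hkh] at hab <;> simp [hab]
  refine ⟨⟨fun n => Matrix.of fun i q => C.G (σ n) i (Fin.castLE hkh q.1, q.2), ?_, ?_, ?_⟩⟩
  · intro m i q
    simp only [σ, Sum.map_inl, Matrix.of_apply, C.systematic]
    congr 1
    simp [Fin.castLE_inj]
  · -- reconstruction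
    intro f hf
    classical
    have hk : kh + (k - kh) = k := Nat.add_sub_cancel' hkh
    set f' : Fin k → (Fin k ⊕ Fin s) :=
      fun p => if hp : (p : ℕ) < kh then σ (f ⟨p, hp⟩) else Sum.inl p with hf'def
    have hf'inj : Function.Injective f' := by
      intro a b hab
      simp only [f'] at hab
      split_ifs at hab with ha hb hb
      · have h2 : (⟨(a:ℕ), ha⟩ : Fin kh) = ⟨(b:ℕ), hb⟩ := hf (σinj hab)
        have := congrArg Fin.val h2
        exact Fin.ext this
      · exfalso
        rcases hfa : f ⟨a, ha⟩ with m | w <;> rw [hfa] at hab <;>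
          simp only [σ, Sum.map_inl, Sum.map_inr, id, Sum.inl.injEq] at hab
        · exact hb (hab ▸ (by simpa using m.isLt))
        · exact (Sum.inr_ne_inl hab)
      · exfalso
        rcases hfb : f ⟨b, hb⟩ with m | w <;> rw [hfb] at hab <;>
          simp only [σ, Sum.map_inl, Sum.map_inr, id, Sum.inl.injEq] at hab
        · exact ha (hab ▸ (by simpa using m.isLt))
        · exact (Sum.inl_ne_inr hab)
      · simpa using hab
    have hM := C.reconstruction f' hf'inj
    set M : Matrix (Fin k × Fin α) (Fin k × Fin α) F :=
      Matrix.of fun p q : Fin k × Fin α => C.G (f' p.1) p.2 q with hMdef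
    set e : ((Fin kh × Fin α) ⊕ (Fin (k - kh) × Fin α)) ≃ (Fin k × Fin α) :=
      (Equiv.sumProdDistrib _ _ _).symm.trans
        (Equiv.prodCongr (finSumFinEquiv.trans (finCongr hk)) (Equiv.refl _)) with he
    have heinl : ∀ p : Fin kh × Fin α, e (Sum.inl p) = (Fin.castLE hkh p.1, p.2) := by
      rintro ⟨p1, p2⟩
      have h0 : e (Sum.inl (p1, p2)) = (finCongr hk (finSumFinEquiv (Sum.inl p1)), p2) := rfl
      rw [h0, Prod.mk.injEq]
      exact ⟨Fin.ext (by simp), rfl⟩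
    have heinr : ∀ p : Fin (k - kh) × Fin α,
        e (Sum.inr p) = (⟨kh + (p.1 : ℕ), by omega⟩, p.2) := by
      rintro ⟨p1, p2⟩
      have h0 : e (Sum.inr (p1, p2)) = (finCongr hk (finSumFinEquiv (Sum.inr p1)), p2) := rfl
      rw [h0, Prod.mk.injEq]
      exact ⟨Fin.ext (by simp), rfl⟩
    set N : Matrix (Fin kh × Fin α) (Fin kh × Fin α) F :=
      Matrix.of fun p q : Fin kh × Fin α => C.G (σ (f p.1)) p.2 (Fin.castLE hkh q.1, q.2)
    set B : Matrix (Fin kh × Fin α) (Fin (k - kh) × Fin α) F :=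
      Matrix.of fun p q => M (e (Sum.inl p)) (e (Sum.inr q)) with hB
    have hblock : M.submatrix e e = Matrix.fromBlocks N B 0 1 := by
      ext i j
      rcases i with p | p <;> rcases j with q | q
      · simp only [Matrix.submatrix_apply, Matrix.fromBlocks_apply₁₁, heinl]
        have h1 : f' (Fin.castLE hkh p.1) = σ (f p.1) := by
          simp only [f']
          rw [dif_pos (by simpa using p.1.isLt)]
          simp only [Fin.coe_castLE, Fin.eta]
        simp [M, N, h1]
      · simp [B]
      · -- zero block
        simp only [Matrix.submatrix_apply, Matrix.fromBlocks_apply₂₁, heinr, heinl,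
          Matrix.zero_apply]
        have h1 : f' ⟨kh + (p.1 : ℕ), by omega⟩ = Sum.inl ⟨kh + (p.1 : ℕ), by omega⟩ := by
          simp only [f']
          rw [dif_neg (by simp)]
        simp only [M, Matrix.of_apply, h1, C.systematic]
        rw [if_neg]
        rintro ⟨h2, -⟩
        have := congrArg Fin.val h2
        simp [Fin.castLE] at this
        omega
      · -- identity block
        simp only [Matrix.submatrix_apply, Matrix.fromBlocks_apply₂₂, heinr]
        have h1 : f' ⟨kh + (p.1 : ℕ), by omega⟩ = Sum.inl ⟨kh + (p.1 : ℕ), by omega⟩ := by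
          simp only [f']
          rw [dif_neg (by simp)]
        simp only [M, Matrix.of_apply, h1, C.systematic, Matrix.one_apply]
        congr 1
        simp only [eq_iff_iff]
        constructor
        · rintro ⟨h2, h3⟩
          have hv := congrArg Fin.val h2
          simp at hv
          have h1 : p.1 = q.1 := by ext; omega
          exact Prod.ext h1 h3.symm
        · rintro rfl
          exact ⟨rfl, rfl⟩
    have : M.det = N.det := by
      rw [← Matrix.det_submatrix_equiv_self e M, hblock, Matrix.det_fromBlocks_zero₂₁,
        Matrix.det_one, mul_one]
    exact this ▸ hM
  · -- regeneration
    intro l D hcard hl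
    classical
    have hkpos : 0 < kh := l.pos
    set σemb : (Fin kh ⊕ Fin s) ↪ (Fin k ⊕ Fin s) := ⟨σ, σinj⟩ with hσemb
    set jemb : Fin (k - kh) ↪ (Fin k ⊕ Fin s) :=
      ⟨fun j => Sum.inl ⟨kh + (j : ℕ), by omega⟩, by
        intro a b hab
        simp only [Sum.inl.injEq, Fin.mk.injEq] at hab
        ext; omega⟩ with hjemb
    have hjapp : ∀ j : Fin (k - kh), jemb j = Sum.inl ⟨kh + (j : ℕ), by omega⟩ := fun j => rfl
    set T : Finset (Fin k ⊕ Fin s) := Finset.univ.map jemb with hT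
    have hdisj : Disjoint (D.map σemb) T := by
      rw [Finset.disjoint_left]
      rintro a ha haT
      simp only [T, Finset.mem_map, Finset.mem_univ, true_and] at haT
      obtain ⟨j, rfl⟩ := haT
      simp only [Finset.mem_map, σemb] at ha
      obtain ⟨n, -, hn⟩ := ha
      rcases n with m | w
      · simp only [σ, hjapp, Sum.map_inl, Function.Embedding.coeFn_mk, Sum.inl.injEq] at hn
        have hv := congrArg Fin.val hn
        have hm := m.isLt
        simp [Fin.castLE] at hv
        omega
      · simp [σ] at hn
    set D' : Finset (Fin k ⊕ Fin s) := D.map σemb ∪ T with hD'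
    have hcard' : D'.card = α + k - 1 := by
      rw [hD', Finset.card_union_of_disjoint hdisj, Finset.card_map, hcard]
      simp only [T, Finset.card_map, Finset.card_univ, Fintype.card_fin]
      omega
    have hl' : Sum.inl (Fin.castLE hkh l) ∉ D' := by
      simp only [hD', Finset.mem_union, not_or]
      constructor
      · intro hmem
        rw [Finset.mem_map] at hmem
        obtain ⟨n, hn, hn2⟩ := hmem
        have hn3 : n = Sum.inl l := σinj hn2
        exact hl (hn3 ▸ hn)
      · intro hmem
        simp only [T, Finset.mem_map, Finset.mem_univ, true_and] at hmem
        obtain ⟨j, hj⟩ := hmem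
        simp only [hjapp, Function.Embedding.coeFn_mk, Sum.inl.injEq] at hj
        have := congrArg Fin.val hj
        simp [Fin.castLE] at this
        omega
    obtain ⟨x, Y, hxY⟩ := C.regeneration (Fin.castLE hkh l) D' hcard' hl'
    refine ⟨fun n => x (σ n), fun i n => Y i (σ n), ?_⟩
    intro i q
    have key := hxY i (Fin.castLE hkh q.1, q.2)
    simp only [Matrix.of_apply]
    have hσl : σ (Sum.inl l) = Sum.inl (Fin.castLE hkh l) := rfl
    rw [hσl, key, hD', Finset.sum_union hdisj]
    have hTzero : ∑ m ∈ T, Y i m * ∑ j, x m j * C.G m j (Fin.castLE hkh q.1, q.2) = 0 := by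
      apply Finset.sum_eq_zero
      intro m hm
      simp only [T, Finset.mem_map, Finset.mem_univ, true_and] at hm
      obtain ⟨j, rfl⟩ := hm
      have : ∀ j', C.G (jemb j) j' (Fin.castLE hkh q.1, q.2) = 0 := by
        intro j'
        simp only [hjapp, Function.Embedding.coeFn_mk, C.systematic]
        rw [if_neg]
        rintro ⟨h2, -⟩
        have := congrArg Fin.val h2
        simp [Fin.castLE] at this
        omega
      simp [this]
    rw [hTzero, add_zero, Finset.sum_map]
    rfl
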